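/- There exists a class ℒ of recursive languages such that ℒ ∈ [τ(CInd)TxtSdEx_C]_REC but ℒ ∉ [TxtItEx_W]_REC; that is, some partial computable set-driven learner that outputs only C-indices on all inputs Ex_C-learns every member of ℒ, but no partial computable iterative learner Ex_W-learns every member of ℒ. -/

import Mathlib

namespace InductiveInference

/-- `φ_e` : the `e`-th partial computable function, via the standard numbering
of `Nat.Partrec.Code`. -/
def phi (e : ℕ) : ℕ →. ℕ := (Denumerable.ofNat Nat.Partrec.Code e).eval

/-- `W_e` : the domain of `φ_e`. -/
def Wset (e : ℕ) : Set ℕ := (phi e).Dom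

/-- `e` is a C-index: `φ_e` is total with values in `{0,1}`. -/
def CIndex (e : ℕ) : Prop := ∀ x, phi e x = Part.some 0 ∨ phi e x = Part.some 1

/-- `C_e = {x | φ_e x = 1}`. -/
def Cset (e : ℕ) : Set ℕ := {x | phi e x = Part.some 1}

/-- A language is recursive (decidable). -/
def RecLang (L : Set ℕ) : Prop := ∃ f : ℕ → Bool, Computable f ∧ ∀ x, x ∈ L ↔ f x = true

/-- Texts: total functions `ℕ → ℕ ∪ {#}`; `none` is the pause symbol `#`. -/
abbrev Text := ℕ → Option ℕ

/-- The content of a text: its range minus the pause symbol. -/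
def content (T : Text) : Set ℕ := {x | ∃ n, T n = some x}

/-- The initial segment `T[n] = (T 0, …, T (n-1))`. -/
def initSeg (T : Text) (n : ℕ) : List (Option ℕ) := (List.range n).map T

/-- The (finite) content of the initial segment `T[n]`. -/
def fincontent (T : Text) (n : ℕ) : Finset ℕ := ((initSeg T n).filterMap id).toFinset

/-- A canonical numerical code for a finite set of naturals. -/
def setCode (D : Finset ℕ) : ℕ := Encodable.encode (D.sort (· ≤ ·))

/-- Learners: partial functions on (suitably coded) natural number inputs. -/
abbrev Learner := ℕ →. ℕ

/-- The learner is partial computable. -/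
def PartComputable (h : Learner) : Prop := Nat.Partrec h

/-- The learner is total computable. -/
def TotalComputable (h : Learner) : Prop := Nat.Partrec h ∧ ∀ x, (h x).Dom

/-- Hypothesis sequences (possibly undefined at some points). -/
abbrev HypSeq := ℕ → Part ℕ

/-- Gold-style (full-information) learning: `G(h,T)(i) = h(T[i])`. -/
def Gop (h : Learner) (T : Text) (i : ℕ) : Part ℕ :=
  h (Encodable.encode (initSeg T i))

/-- Partially set-driven learning: `Psd(h,T)(i) = h(content T[i], i)`. -/
def Psdop (h : Learner) (T : Text) (i : ℕ) : Part ℕ :=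
  h (Nat.pair (setCode (fincontent T i)) i)

/-- Set-driven learning: `Sd(h,T)(i) = h(content T[i])`. -/
def Sdop (h : Learner) (T : Text) (i : ℕ) : Part ℕ :=
  h (setCode (fincontent T i))

/-- Iterative learning: the input `none` codes the empty start sequence `ε`,
and `some (e, x)` codes the pair of previous hypothesis `e` and datum `x`. -/
def Itop (h : Learner) (T : Text) : ℕ → Part ℕ
  | 0 => h (Encodable.encode (none : Option (ℕ × Option ℕ)))
  | i + 1 => (Itop h T i).bind fun e =>
      h (Encodable.encode (some (e, T i) : Option (ℕ × Option ℕ)))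

/-- Transductive learning: the learner receives the single (coded) datum
`T i`; the output `0` codes the distinguished symbol `?`, and the output
`e + 1` codes the hypothesis `e`.  The value `?` of the hypothesis sequence
is represented by `Part.none`. -/
def Tdop (h : Learner) (T : Text) : ℕ → Part ℕ
  | 0 => Part.none
  | i + 1 => (h (Encodable.encode (T i))).bind fun v =>
      match v with
      | 0 => Tdop h T i
      | e + 1 => Part.some e

/-- `Ex_C`: syntactic convergence to a single correct C-index. -/
def ExC (p : HypSeq) (T : Text) : Prop :=
  ∃ n₀, (∀ n, n₀ ≤ n → p n = p n₀) ∧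
    ∃ e, p n₀ = Part.some e ∧ CIndex e ∧ Cset e = content T

/-- `Ex_W`: syntactic convergence to a single correct W-index. -/
def ExW (p : HypSeq) (T : Text) : Prop :=
  ∃ n₀, (∀ n, n₀ ≤ n → p n = p n₀) ∧
    ∃ e, p n₀ = Part.some e ∧ Wset e = content T

/-- `Bc_C`: semantic convergence to correct C-indices. -/
def BcC (p : HypSeq) (T : Text) : Prop :=
  ∃ n₀, ∀ n, n₀ ≤ n → ∃ e, p n = Part.some e ∧ CIndex e ∧ Cset e = content T

/-- `Bc_W`: semantic convergence to correct W-indices. -/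
def BcW (p : HypSeq) (T : Text) : Prop :=
  ∃ n₀, ∀ n, n₀ ≤ n → ∃ e, p n = Part.some e ∧ Wset e = content T

/-- `CInd`: every hypothesis output is a C-index. -/
def CIndRes (p : HypSeq) (_T : Text) : Prop :=
  ∀ i e, p i = Part.some e → CIndex e

/-- `T`: the always-true restriction. -/
def TrueRes (_p : HypSeq) (_T : Text) : Prop := True

abbrev InteractionOp := Learner → Text → HypSeq
abbrev Restriction := HypSeq → Text → Prop

/-- Conjunction of restrictions. -/
def andRes (δ δ' : Restriction) : Restriction := fun p T => δ p T ∧ δ' p T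

/-- `h` `Txtβδ`-learns `L`: on every text for `L` the restriction `δ` holds. -/
def Learns (β : InteractionOp) (δ : Restriction) (h : Learner) (L : Set ℕ) : Prop :=
  ∀ T : Text, content T = L → δ (β h T) T

/-- The restriction `α` holds for `h` on all texts whatsoever. -/
def OnAllTexts (β : InteractionOp) (α : Restriction) (h : Learner) : Prop :=
  ∀ T : Text, α (β h T) T

/-- A class of recursive languages. -/
def IsRecClass (ℒ : Set (Set ℕ)) : Prop := ∀ L ∈ ℒ, RecLang L

/-- `[𝒞Txtβδ]_REC`: classes of recursive languages learnable by some
learner from `C` under interaction operator `β` and restriction `δ`. -/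
def LearnableREC (C : Learner → Prop) (β : InteractionOp) (δ : Restriction) :
    Set (Set (Set ℕ)) :=
  {ℒ | IsRecClass ℒ ∧ ∃ h, C h ∧ ∀ L ∈ ℒ, Learns β δ h L}

/-- `[τ(α)𝒞Txtβδ]_REC`: as above, where additionally `α` must hold on
arbitrary texts. -/
def TauLearnableREC (C : Learner → Prop) (α : Restriction) (β : InteractionOp)
    (δ : Restriction) : Set (Set (Set ℕ)) :=
  {ℒ | IsRecClass ℒ ∧ ∃ h, C h ∧ OnAllTexts β α h ∧ ∀ L ∈ ℒ, Learns β δ h L}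


/-! ### Auxiliary machinery -/

section Aux

private def decL (m : ℕ) : List ℕ := (Encodable.decode (α := List ℕ) m).getD []

private def hasOdd (l : List ℕ) : Bool := l.foldr (fun a b => (a % 2 == 1) || b) false

private def memB (x : ℕ) (l : List ℕ) : Bool := l.foldr (fun a b => (a == x) || b) false

private lemma hasOdd_iff (l : List ℕ) : hasOdd l = true ↔ ∃ a ∈ l, a % 2 = 1 := by
  induction l with
  | nil => simp [hasOdd]
  | cons a l ih => simp [hasOdd] at ih ⊢; rw [ih]

private lemma memB_iff (x : ℕ) (l : List ℕ) : memB x l = true ↔ x ∈ l := by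
  induction l with
  | nil => simp [memB]
  | cons a l ih =>
    simp [memB] at ih ⊢; rw [ih]
    constructor
    · rintro (h|h); exacts [Or.inl h.symm, Or.inr h]
    · rintro (h|h); exacts [Or.inl h.symm, Or.inr h]

private lemma primrec_decL : Primrec decL :=
  Primrec.option_getD.comp Primrec.decode (Primrec.const [])

private lemma primrec_hasOdd : Primrec hasOdd := by
  have H : Primrec₂ (fun (_ : List ℕ) (p : ℕ × Bool) => (p.1 % 2 == 1) || p.2) :=
    (Primrec.or.comp
      (Primrec.beq.comp (Primrec.nat_mod.comp (Primrec.fst.comp Primrec.snd) (Primrec.const 2))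
        (Primrec.const 1))
      (Primrec.snd.comp Primrec.snd)).to₂
  exact (Primrec.list_foldr Primrec.id (Primrec.const false) H).of_eq fun l => rfl

private lemma primrec_memB : Primrec₂ memB := by
  have H : Primrec₂ (fun (a : ℕ × List ℕ) (p : ℕ × Bool) => (p.1 == a.1) || p.2) :=
    (Primrec.or.comp
      (Primrec.beq.comp (Primrec.fst.comp Primrec.snd) (Primrec.fst.comp Primrec.fst))
      (Primrec.snd.comp Primrec.snd)).to₂
  exact (Primrec.list_foldr Primrec.snd (Primrec.const false) H).of_eq fun l => rfl

private def gfun (m x : ℕ) : ℕ :=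
  bif hasOdd (decL m) then (bif memB x (decL m) then 1 else 0)
  else (bif x % 2 == 0 then 1 else 0)

private lemma primrec_gfun : Primrec₂ gfun := by
  have hc : Primrec (fun p : ℕ × ℕ => hasOdd (decL p.1)) :=
    primrec_hasOdd.comp (primrec_decL.comp Primrec.fst)
  have h1 : Primrec (fun p : ℕ × ℕ => bif memB p.2 (decL p.1) then 1 else 0) :=
    Primrec.cond (primrec_memB.comp Primrec.snd (primrec_decL.comp Primrec.fst))
      (Primrec.const 1) (Primrec.const 0)
  have h2 : Primrec (fun p : ℕ × ℕ => bif p.2 % 2 == 0 then 1 else 0) :=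
    Primrec.cond (Primrec.beq.comp (Primrec.nat_mod.comp Primrec.snd (Primrec.const 2))
      (Primrec.const 0)) (Primrec.const 1) (Primrec.const 0)
  exact (Primrec.cond hc h1 h2).to₂

private lemma gfun_cases (m x : ℕ) : gfun m x = 0 ∨ gfun m x = 1 := by
  unfold gfun
  cases hasOdd (decL m) <;> [cases (x % 2 == 0); cases memB x (decL m)] <;> simp

private lemma exists_idx : ∃ idx : ℕ → ℕ, Computable idx ∧
    ∀ m x, phi (idx m) x = Part.some (gfun m x) := by
  have hcomp : Computable (fun n : ℕ => gfun n.unpair.1 n.unpair.2) :=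
    (primrec_gfun.comp (Primrec.fst.comp Primrec.unpair)
      (Primrec.snd.comp Primrec.unpair)).to_comp
  have hg : Nat.Partrec (fun n => Part.some (gfun n.unpair.1 n.unpair.2) : ℕ →. ℕ) :=
    Partrec.nat_iff.1 hcomp
  obtain ⟨c, hc⟩ := Nat.Partrec.Code.exists_code.1 hg
  obtain ⟨s, s_comp, hs⟩ := Nat.Partrec.Code.smn
  refine ⟨fun m => Encodable.encode (s c m),
    Computable.encode.comp (s_comp.comp (Computable.const c) Computable.id), ?_⟩
  intro m x
  simp only [phi, Denumerable.ofNat_encode, hs, hc, Nat.unpair_pair]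

private lemma decL_setCode (D : Finset ℕ) : decL (setCode D) = D.sort (· ≤ ·) := by
  simp [decL, setCode, Encodable.encodek]

private lemma hasOdd_setCode (D : Finset ℕ) :
    hasOdd (decL (setCode D)) = true ↔ ∃ x ∈ D, x % 2 = 1 := by
  rw [decL_setCode, hasOdd_iff]
  simp [Finset.mem_sort]

private lemma mem_fincontent {T : Text} {n x : ℕ} :
    x ∈ fincontent T n ↔ ∃ k < n, T k = some x := by
  simp only [fincontent, initSeg, List.mem_toFinset, List.mem_filterMap, List.mem_map,
    List.mem_range, id_eq]
  constructor
  · rintro ⟨a, ⟨k, hk, rfl⟩, ha⟩; exact ⟨k, hk, ha⟩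
  · rintro ⟨k, hk, hT⟩; exact ⟨T k, ⟨k, hk, rfl⟩, hT⟩

private lemma fincontent_subset_content {T : Text} {n : ℕ} :
    (fincontent T n : Set ℕ) ⊆ content T := by
  intro x hx
  rw [Finset.mem_coe, mem_fincontent] at hx
  obtain ⟨k, _, hk⟩ := hx
  exact ⟨k, hk⟩

private lemma fincontent_stab {T : Text} (hfin : (content T).Finite) :
    ∃ N, ∀ n, N ≤ n → (fincontent T n : Set ℕ) = content T := by
  classical
  set f : ℕ → ℕ := fun x => if hx : x ∈ content T then hx.choose else 0 with hf
  refine ⟨hfin.toFinset.sup (fun x => f x + 1), fun n hn => ?_⟩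
  apply Set.Subset.antisymm fincontent_subset_content
  intro x hx
  have hx' : x ∈ hfin.toFinset := hfin.mem_toFinset.2 hx
  have hle : f x + 1 ≤ n := le_trans (Finset.le_sup (f := fun x => f x + 1) hx') hn
  have hTfx : T (f x) = some x := by
    simp only [hf, dif_pos hx]; exact hx.choose_spec
  rw [Finset.mem_coe, mem_fincontent]
  exact ⟨f x, lt_of_lt_of_le (Nat.lt_succ_self _) hle, hTfx⟩

/-! ### States of iterative learners -/

private def stepF (h : Learner) (p : Part ℕ) (a : Option ℕ) : Part ℕ :=
  p.bind fun e => h (Encodable.encode (some (e, a) : Option (ℕ × Option ℕ)))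

private def stL (h : Learner) (l : List (Option ℕ)) : Part ℕ :=
  l.foldl (stepF h) (h (Encodable.encode (none : Option (ℕ × Option ℕ))))

private lemma initSeg_succ (T : Text) (n : ℕ) :
    initSeg T (n + 1) = initSeg T n ++ [T n] := by
  simp [initSeg, List.range_succ]

private lemma Itop_eq_stL (h : Learner) (T : Text) (n : ℕ) :
    Itop h T n = stL h (initSeg T n) := by
  induction n with
  | zero => simp [Itop, stL, initSeg]
  | succ n ih => rw [Itop, ih, initSeg_succ, stL, stL, List.foldl_append]; rfl

private lemma stL_append (h : Learner) (l r : List (Option ℕ)) :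
    stL h (l ++ r) = r.foldl (stepF h) (stL h l) := by
  simp [stL, List.foldl_append]

private lemma stL_congr {h : Learner} {l₁ l₂ : List (Option ℕ)}
    (hl : stL h l₁ = stL h l₂) (r : List (Option ℕ)) :
    stL h (l₁ ++ r) = stL h (l₂ ++ r) := by
  rw [stL_append, stL_append, hl]

private def pauseText (l : List (Option ℕ)) : Text := fun n => (l[n]?).getD none

private lemma initSeg_pauseText (l : List (Option ℕ)) (m : ℕ) :
    initSeg (pauseText l) (l.length + m) = l ++ List.replicate m none := by
  apply List.ext_getElem
  · simp [initSeg]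
  · intro n h1 h2
    simp only [initSeg, List.getElem_map, List.getElem_range, pauseText]
    rcases lt_or_ge n l.length with hn | hn
    · rw [List.getElem_append_left hn, List.getElem?_eq_getElem hn, Option.getD_some]
    · rw [List.getElem_append_right hn, List.getElem_replicate,
        List.getElem?_eq_none hn, Option.getD_none]

private lemma content_pauseText (l : List (Option ℕ)) :
    content (pauseText l) = {x | some x ∈ l} := by
  ext x
  simp only [content, Set.mem_setOf_eq, pauseText]
  constructor
  · rintro ⟨n, hn⟩
    rcases hg : l[n]? with _ | a
    · rw [hg] at hn; simp at hn
    · rw [hg] at hn; simp at hn; subst hn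
      exact List.mem_of_getElem? hg
  · intro hx
    obtain ⟨n, hn, hg⟩ := List.getElem_of_mem hx
    exact ⟨n, by rw [List.getElem?_eq_getElem hn, Option.getD_some, hg]⟩

private lemma finite_mem_list (l : List (Option ℕ)) : {x : ℕ | some x ∈ l}.Finite := by
  apply Set.Finite.ofFinset (l.filterMap id).toFinset
  intro x
  simp [List.mem_filterMap]

private lemma le_foldr_max {a : ℕ} {l : List ℕ} (h : a ∈ l) : a ≤ l.foldr max 0 := by
  induction l with
  | nil => simp at h
  | cons b l ih =>
    rcases List.mem_cons.1 h with rfl | h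
    · exact le_max_left _ _
    · exact le_trans (ih h) (le_max_right _ _)

/-! ### The adversary text against iterative learners -/

private def EvL (l : List (Option ℕ)) : Prop := ∀ a ∈ l, ∃ x, a = some x ∧ x % 2 = 0

open Classical in
private noncomputable def advPick (h : Learner) (l : List (Option ℕ)) : ℕ :=
  if H : ∃ x, x % 2 = 0 ∧ stL h (l ++ [some x]) ≠ stL h l then H.choose else 0

private lemma advPick_even (h : Learner) (l : List (Option ℕ)) : advPick h l % 2 = 0 := by
  unfold advPick
  split
  · next H => exact H.choose_spec.1
  · rfl

private lemma advPick_spec {h : Learner} {l : List (Option ℕ)}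
    (H : ∃ x, x % 2 = 0 ∧ stL h (l ++ [some x]) ≠ stL h l) :
    stL h (l ++ [some (advPick h l)]) ≠ stL h l := by
  unfold advPick
  rw [dif_pos H]
  exact H.choose_spec.2

private noncomputable def advL (h : Learner) : ℕ → List (Option ℕ)
  | 0 => []
  | k + 1 => advL h k ++ [some (2 * k), some (advPick h (advL h k ++ [some (2 * k)]))]

private lemma advL_evL (h : Learner) (k : ℕ) : EvL (advL h k) := by
  induction k with
  | zero => intro a ha; simp [advL] at ha
  | succ k ih =>
    intro a ha
    simp only [advL, List.mem_append, List.mem_cons] at ha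
    rcases ha with ha | ha | ha | ha
    · exact ih a ha
    · exact ⟨2 * k, ha, Nat.mul_mod_right 2 k⟩
    · exact ⟨_, ha, advPick_even h _⟩
    · simp at ha

private noncomputable def advT (h : Learner) : Text := fun n =>
  if n % 2 = 0 then some n
  else some (advPick h (advL h (n / 2) ++ [some (n - 1)]))

private lemma advT_initSeg (h : Learner) (k : ℕ) :
    initSeg (advT h) (2 * k) = advL h k := by
  induction k with
  | zero => simp [initSeg, advL]
  | succ k ih =>
    have h2 : 2 * (k + 1) = (2 * k + 1) + 1 := by ring
    rw [h2, initSeg_succ, initSeg_succ, ih]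
    have hT1 : advT h (2 * k) = some (2 * k) := by
      simp [advT, Nat.mul_mod_right]
    have hT2 : advT h (2 * k + 1) =
        some (advPick h (advL h k ++ [some (2 * k)])) := by
      have hodd : (2 * k + 1) % 2 = 1 := by omega
      have hdiv : (2 * k + 1) / 2 = k := by omega
      simp [advT, hodd, hdiv]
    rw [hT1, hT2]
    simp [advL]

private lemma content_advT (h : Learner) : content (advT h) = {x : ℕ | x % 2 = 0} := by
  ext x
  simp only [content, Set.mem_setOf_eq]
  constructor
  · rintro ⟨n, hn⟩
    unfold advT at hn
    split at hn
    · next he => cases hn; exact he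
    · cases hn; exact advPick_even h _
  · intro hx
    exact ⟨x, by simp [advT, hx]⟩

private lemma advT_mindchange {h : Learner}
    (hkey : ∀ l, EvL l → ∃ x, x % 2 = 0 ∧ stL h (l ++ [some x]) ≠ stL h l) (k : ℕ) :
    stL h (initSeg (advT h) (2 * k + 2)) ≠ stL h (initSeg (advT h) (2 * k + 1)) := by
  have hT1 : advT h (2 * k) = some (2 * k) := by simp [advT, Nat.mul_mod_right]
  have e1 : initSeg (advT h) (2 * k + 1) = advL h k ++ [some (2 * k)] := by
    rw [initSeg_succ, advT_initSeg, hT1]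
  have e2 : initSeg (advT h) (2 * k + 2) =
      (advL h k ++ [some (2 * k)]) ++ [some (advPick h (advL h k ++ [some (2 * k)]))] := by
    have h22 : 2 * k + 2 = 2 * (k + 1) := by ring
    rw [h22, advT_initSeg]
    simp [advL]
  rw [e1, e2]
  apply advPick_spec
  apply hkey
  intro a ha
  rcases List.mem_append.1 ha with ha | ha
  · exact advL_evL h k a ha
  · simp at ha; exact ⟨2 * k, ha, Nat.mul_mod_right 2 k⟩

end Aux

/-- There is a class of recursive languages in `[τ(CInd)TxtSdEx_C]_REC` but
not in `[TxtItEx_W]_REC`. -/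
theorem tau_cind_sd_not_it_exW :
    ∃ ℒ : Set (Set ℕ),
      ℒ ∈ TauLearnableREC PartComputable CIndRes Sdop ExC ∧
      ℒ ∉ LearnableREC PartComputable Itop ExW := by
  classical
  set Ev : Set ℕ := {x : ℕ | x % 2 = 0} with hEvdef
  set ℒ : Set (Set ℕ) := insert Ev {F : Set ℕ | F.Finite ∧ ∃ x ∈ F, x % 2 = 1} with hLdef
  have hrec : IsRecClass ℒ := by
    intro L hL
    rcases Set.mem_insert_iff.1 hL with rfl | ⟨hfin, -⟩
    · refine ⟨fun x => decide (x % 2 = 0), ?_, fun x => by simp [hEvdef]⟩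
      exact (Primrec.eq.comp (Primrec.nat_mod.comp Primrec.id (Primrec.const 2))
        (Primrec.const 0)).decide.to_comp
    · refine ⟨fun x => memB x (hfin.toFinset.sort (· ≤ ·)),
        (primrec_memB.comp Primrec.id (Primrec.const _)).to_comp, fun x => ?_⟩
      rw [memB_iff, Finset.mem_sort, Set.Finite.mem_toFinset]
  refine ⟨ℒ, ?_, ?_⟩
  · -- positive side: set-driven learning with C-indices
    obtain ⟨idx, idx_comp, hidx⟩ := exists_idx
    have CIndex_idx : ∀ m, CIndex (idx m) := by
      intro m x
      rcases gfun_cases m x with h0 | h1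
      · left; rw [hidx, h0]
      · right; rw [hidx, h1]
    have Cset_idx : ∀ m, Cset (idx m) = {x | gfun m x = 1} := by
      intro m; ext x
      simp only [Cset, Set.mem_setOf_eq, hidx, Part.some_inj]
    set m₀ := setCode ∅ with hm₀
    have hdecm₀ : decL m₀ = [] := by rw [hm₀, decL_setCode, Finset.sort_empty]
    have hCsetE : Cset (idx m₀) = Ev := by
      rw [Cset_idx]; ext x
      have hfa : hasOdd (decL m₀) = false := by rw [hdecm₀]; rfl
      by_cases hx : x % 2 = 0
      · have hb : (x % 2 == 0) = true := by simpa using hx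
        simp [gfun, hfa, hb, hEvdef, hx]
      · have hb : (x % 2 == 0) = false := by simpa using hx
        simp [gfun, hfa, hb, hEvdef, hx]
    set Hf : ℕ → ℕ := fun m => idx (bif hasOdd (decL m) then m else m₀) with hHfdef
    set h : Learner := fun m => Part.some (Hf m) with hdef
    have hSd : ∀ T n, Sdop h T n = Part.some (Hf (setCode (fincontent T n))) := fun T n => rfl
    refine ⟨hrec, h, ?_, ?_, ?_⟩
    · -- partial computability
      have hHf : Computable Hf := by
        apply idx_comp.comp
        exact (Primrec.cond (primrec_hasOdd.comp primrec_decL) Primrec.id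
          (Primrec.const m₀)).to_comp
      exact Partrec.nat_iff.1 hHf
    · -- all outputs are C-indices
      intro T i e hpe
      rw [hSd] at hpe
      have : Hf (setCode (fincontent T i)) = e := Part.some_inj.1 hpe
      rw [← this, hHfdef]
      exact CIndex_idx _
    · -- learning
      intro L hL T hT
      rcases Set.mem_insert_iff.1 hL with rfl | ⟨hfin, z, hzL, hzodd⟩
      · -- the set of even numbers
        have hall : ∀ n, Sdop h T n = Part.some (idx m₀) := by
          intro n
          rw [hSd]
          have hno : ¬ ∃ x ∈ fincontent T n, x % 2 = 1 := by
            rintro ⟨x, hx, hxodd⟩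
            have hxc : x ∈ content T := fincontent_subset_content (Finset.mem_coe.2 hx)
            rw [hT, hEvdef] at hxc
            simp only [Set.mem_setOf_eq] at hxc
            omega
          have hfalse : hasOdd (decL (setCode (fincontent T n))) = false := by
            rw [← Bool.not_eq_true, hasOdd_setCode]
            exact hno
          simp [hHfdef, hfalse]
        exact ⟨0, fun n _ => by rw [hall n, hall 0], idx m₀, hall 0, CIndex_idx _,
          by rw [hCsetE, hT]⟩
      · -- a finite set containing an odd number
        have hcfin : (content T).Finite := by rw [hT]; exact hfin
        obtain ⟨N, hN⟩ := fincontent_stab hcfin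
        have hDn : ∀ n, N ≤ n → fincontent T n = fincontent T N := by
          intro n hn
          exact Finset.coe_injective (by rw [hN n hn, hN N le_rfl])
        have hoddN : ∃ x ∈ fincontent T N, x % 2 = 1 := by
          refine ⟨z, ?_, hzodd⟩
          have : z ∈ (fincontent T N : Set ℕ) := by rw [hN N le_rfl, hT]; exact hzL
          exact Finset.mem_coe.1 this
        have hSdN : ∀ n, N ≤ n → Sdop h T n = Part.some (idx (setCode (fincontent T N))) := by
          intro n hn
          rw [hSd, hDn n hn]
          have htrue : hasOdd (decL (setCode (fincontent T N))) = true :=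
            (hasOdd_setCode _).2 hoddN
          simp [hHfdef, htrue]
        refine ⟨N, fun n hn => by rw [hSdN n hn, hSdN N le_rfl], _, hSdN N le_rfl,
          CIndex_idx _, ?_⟩
        rw [Cset_idx]
        ext x
        have htrue : hasOdd (decL (setCode (fincontent T N))) = true :=
          (hasOdd_setCode _).2 hoddN
        have : gfun (setCode (fincontent T N)) x = 1 ↔ x ∈ fincontent T N := by
          by_cases hx : x ∈ fincontent T N
          · have : memB x (decL (setCode (fincontent T N))) = true := by
              rw [decL_setCode, memB_iff, Finset.mem_sort]; exact hx
            simp [gfun, htrue, this, hx]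
          · have : memB x (decL (setCode (fincontent T N))) = false := by
              rw [← Bool.not_eq_true, decL_setCode, memB_iff, Finset.mem_sort]; exact hx
            simp [gfun, htrue, this, hx]
        rw [Set.mem_setOf_eq, this, ← Finset.mem_coe, hN N le_rfl, hT]
  · -- negative side: no iterative learner
    rintro ⟨-, h, -, hlearn⟩
    have hEvMem : Ev ∈ ℒ := Set.mem_insert _ _
    -- Stage 1: find a stable sequence of evens
    have hA : ∃ σ, EvL σ ∧ ∀ x, x % 2 = 0 → stL h (σ ++ [some x]) = stL h σ := by
      by_contra hA
      push_neg at hA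
      have hkey : ∀ l, EvL l → ∃ x, x % 2 = 0 ∧ stL h (l ++ [some x]) ≠ stL h l := hA
      have hcT : content (advT h) = Ev := by rw [content_advT, hEvdef]
      obtain ⟨n₀, hconst, e, he, -⟩ := hlearn Ev hEvMem (advT h) hcT
      have h1 : Itop h (advT h) (2 * n₀ + 1) = Itop h (advT h) n₀ := hconst _ (by omega)
      have h2 : Itop h (advT h) (2 * n₀ + 2) = Itop h (advT h) n₀ := hconst _ (by omega)
      apply advT_mindchange hkey n₀
      rw [← Itop_eq_stL, ← Itop_eq_stL, h1, h2]
    obtain ⟨σ, hEvσ, hstab⟩ := hA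
    -- Stage 2: fool the learner with two finite languages
    set M := (σ.filterMap id).foldr max 0 with hM
    set x₀ := 2 * M + 2 with hx₀
    have hx₀even : x₀ % 2 = 0 := by omega
    have hx₀notin : some x₀ ∉ σ := by
      intro hmem
      have h1 : x₀ ∈ σ.filterMap id := List.mem_filterMap.2 ⟨some x₀, hmem, rfl⟩
      have h2 := le_foldr_max h1
      omega
    set l₁ : List (Option ℕ) := σ ++ [some 1] with hl₁
    set l₂ : List (Option ℕ) := σ ++ [some x₀, some 1] with hl₂
    set T₁ := pauseText l₁ with hT₁
    set T₂ := pauseText l₂ with hT₂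
    have hmemL : ∀ l : List (Option ℕ), some 1 ∈ l → content (pauseText l) ∈ ℒ := by
      intro l hl
      apply Set.mem_insert_iff.2
      right
      rw [content_pauseText]
      exact ⟨finite_mem_list l, 1, hl, rfl⟩
    have hL₁ : content T₁ ∈ ℒ := hmemL l₁ (by simp [hl₁])
    have hL₂ : content T₂ ∈ ℒ := hmemL l₂ (by simp [hl₂])
    obtain ⟨n₁, hc₁, e₁, he₁, hW₁⟩ := hlearn _ hL₁ T₁ rfl
    obtain ⟨n₂, hc₂, e₂, he₂, hW₂⟩ := hlearn _ hL₂ T₂ rfl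
    have hlen₁ : l₁.length = σ.length + 1 := by simp [hl₁]
    have hlen₂ : l₂.length = σ.length + 2 := by simp [hl₂]
    have hkeyeq : ∀ m, Itop h T₂ (σ.length + 2 + m) = Itop h T₁ (σ.length + 1 + m) := by
      intro m
      rw [Itop_eq_stL, Itop_eq_stL]
      have e2 : initSeg T₂ (σ.length + 2 + m) = l₂ ++ List.replicate m none := by
        rw [hT₂, ← hlen₂, initSeg_pauseText]
      have e1 : initSeg T₁ (σ.length + 1 + m) = l₁ ++ List.replicate m none := by
        rw [hT₁, ← hlen₁, initSeg_pauseText]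
      rw [e1, e2]
      have hst : stL h (σ ++ [some x₀]) = stL h σ := hstab x₀ hx₀even
      calc stL h (l₂ ++ List.replicate m none)
          = stL h ((σ ++ [some x₀]) ++ ([some 1] ++ List.replicate m none)) := by
            rw [hl₂]; simp [List.append_assoc]
        _ = stL h (σ ++ ([some 1] ++ List.replicate m none)) := stL_congr hst _
        _ = stL h (l₁ ++ List.replicate m none) := by rw [hl₁]; simp [List.append_assoc]
    set m := n₁ + n₂ with hm
    have hp₁ : Itop h T₁ (σ.length + 1 + m) = Part.some e₁ := by
      rw [hc₁ _ (by omega), he₁]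
    have hp₂ : Itop h T₂ (σ.length + 2 + m) = Part.some e₂ := by
      rw [hc₂ _ (by omega), he₂]
    have heq : e₂ = e₁ := by
      have := hkeyeq m
      rw [hp₁, hp₂] at this
      exact Part.some_inj.1 this
    have hx₀T₂ : x₀ ∈ content T₂ := by
      rw [hT₂, content_pauseText]
      simp [hl₂]
    have hx₀T₁ : x₀ ∉ content T₁ := by
      rw [hT₁, content_pauseText, hl₁]
      simp only [Set.mem_setOf_eq, List.mem_append, List.mem_singleton]
      rintro (hin | hin)
      · exact hx₀notin hin
      · simp at hin; omega
    rw [← hW₂, heq, hW₁] at hx₀T₂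
    exact hx₀T₁ hx₀T₂

end InductiveInference
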